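/- Let m ≥ 4 and let a, b, c ∈ V = 𝔽₂^{2m} be linearly independent over 𝔽₂. Then for any ε₁, ε₂, ε₃ ∈ 𝔽₂, the quadratic form θ₀ is not constant on the set L(a,ε₁) ∩ L(b,ε₂) ∩ L(c,ε₃), where L(x,ε) = {v ∈ V : φ(v,x) = ε}; that is, there exist w, w′ ∈ V with φ(w,a) = φ(w′,a) = ε₁, φ(w,b) = φ(w′,b) = ε₂, φ(w,c) = φ(w′,c) = ε₃, and θ₀(w) ≠ θ₀(w′). -/

import Mathlib

open Matrix

/-- Row vectors in `𝔽₂^{2m}`, with coordinates indexed by `Fin m ⊕ Fin m`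
(the first block and the second block of `m` coordinates). -/
abbrev Vm (m : ℕ) := (Fin m ⊕ Fin m) → ZMod 2

/-- The block matrix `e = (0 Iₘ; 0 0)`. -/
def eMat (m : ℕ) : Matrix (Fin m ⊕ Fin m) (Fin m ⊕ Fin m) (ZMod 2) :=
  Matrix.fromBlocks 0 1 0 0

/-- The block matrix `f = e + eᵀ = (0 Iₘ; Iₘ 0)`. -/
def fMat (m : ℕ) : Matrix (Fin m ⊕ Fin m) (Fin m ⊕ Fin m) (ZMod 2) :=
  eMat m + (eMat m)ᵀ

/-- The alternating bilinear form `φ(u,v) = u f vᵀ`. -/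
def phi (m : ℕ) (u v : Vm m) : ZMod 2 := u ⬝ᵥ (fMat m).mulVec v

/-- The quadratic form `θ₀(u) = u e uᵀ`. -/
def theta0 (m : ℕ) (u : Vm m) : ZMod 2 := u ⬝ᵥ (eMat m).mulVec u

/-- The quadratic form `θ_a(u) = θ₀(u) + φ(u,a)`. -/
def theta (m : ℕ) (a u : Vm m) : ZMod 2 := theta0 m u + phi m u a

/-- The transvection `t_c : u ↦ u + φ(u,c)·c`. -/
def tvec (m : ℕ) (c u : Vm m) : Vm m := u + phi m u c • c

namespace Stmt6Aux

variable {m : ℕ}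

lemma fMat_transpose (m : ℕ) : (fMat m)ᵀ = fMat m := by
  simp [fMat, Matrix.transpose_add, add_comm]

lemma dot_transpose (A : Matrix (Fin m ⊕ Fin m) (Fin m ⊕ Fin m) (ZMod 2)) (u v : Vm m) :
    u ⬝ᵥ Aᵀ.mulVec v = v ⬝ᵥ A.mulVec u := by
  rw [Matrix.dotProduct_mulVec, ← Matrix.mulVec_transpose, Matrix.transpose_transpose,
    dotProduct_comm]

lemma phi_symm (u v : Vm m) : phi m u v = phi m v u := by
  conv_lhs => rw [phi, ← fMat_transpose, dot_transpose]
  rfl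

lemma phi_add_left (u u' v : Vm m) : phi m (u + u') v = phi m u v + phi m u' v := by
  simp [phi, add_dotProduct]

lemma phi_add_right (u v v' : Vm m) : phi m u (v + v') = phi m u v + phi m u v' := by
  simp [phi, Matrix.mulVec_add, dotProduct_add]

lemma phi_smul_left (r : ZMod 2) (u v : Vm m) : phi m (r • u) v = r * phi m u v := by
  simp [phi, smul_dotProduct]

lemma phi_smul_right (r : ZMod 2) (u v : Vm m) : phi m u (r • v) = r * phi m u v := by
  simp [phi, Matrix.mulVec_smul, dotProduct_smul]

lemma theta0_add (u v : Vm m) :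
    theta0 m (u + v) = theta0 m u + theta0 m v + phi m u v := by
  have h : u ⬝ᵥ (eMat m)ᵀ.mulVec v = v ⬝ᵥ (eMat m).mulVec u := dot_transpose _ u v
  simp only [theta0, phi, fMat, Matrix.add_mulVec, Matrix.mulVec_add, dotProduct_add,
    add_dotProduct, h]
  ring

/-- `phi` as a bilinear form. -/
def phiB (m : ℕ) : LinearMap.BilinForm (ZMod 2) (Vm m) :=
  LinearMap.mk₂ (ZMod 2) (phi m) phi_add_left phi_smul_left phi_add_right phi_smul_right

@[simp] lemma phiB_apply (u v : Vm m) : phiB m u v = phi m u v := rfl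

lemma phiB_refl : (phiB m).IsRefl := by
  intro u v h
  simpa [phi_symm] using h

lemma phi_single_inl (v : Vm m) (i : Fin m) :
    phi m v (Pi.single (Sum.inl i) 1) = v (Sum.inr i) := by
  simp [phi, fMat, eMat, Matrix.mulVec_single, dotProduct, Fintype.sum_sum_type,
    Matrix.one_apply, Pi.single_apply, Finset.sum_ite_eq', Finset.mul_sum, mul_ite]

lemma phi_single_inr (v : Vm m) (i : Fin m) :
    phi m v (Pi.single (Sum.inr i) 1) = v (Sum.inl i) := by
  simp [phi, fMat, eMat, Matrix.mulVec_single, dotProduct, Fintype.sum_sum_type,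
    Matrix.one_apply, Pi.single_apply, Finset.sum_ite_eq', Finset.mul_sum, mul_ite]

lemma phiB_nondeg : (phiB m).Nondegenerate := by
  have hL : ∀ v : Vm m, (∀ w, phiB m v w = 0) → v = 0 := by
    intro v hv
    funext x
    cases x with
    | inl i => simpa using (phi_single_inr v i).symm.trans (hv (Pi.single (Sum.inr i) 1))
    | inr i => simpa using (phi_single_inl v i).symm.trans (hv (Pi.single (Sum.inl i) 1))
  exact ⟨hL, fun v hv => hL v (fun w => by simpa [phi_symm] using hv w)⟩

lemma zmod2_ne_zero {x : ZMod 2} (h : x ≠ 0) : x = 1 := by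
  revert h; revert x; decide

/-- Key step: if `x ∉ span {y, z}`, there is `v` orthogonal to `y, z` with `φ(v,x)=1`. -/
lemma exists_ortho (m : ℕ) (x y z : Vm m)
    (hx : x ∉ Submodule.span (ZMod 2) ({y, z} : Set (Vm m))) :
    ∃ v : Vm m, phi m v y = 0 ∧ phi m v z = 0 ∧ phi m v x = 1 := by
  classical
  set N := Submodule.span (ZMod 2) ({y, z} : Set (Vm m))
  by_contra hcon
  push_neg at hcon
  apply hx
  have hmem : x ∈ (phiB m).orthogonal ((phiB m).orthogonal N) := by
    rw [LinearMap.BilinForm.mem_orthogonal_iff]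
    intro v hv
    have hy : phi m v y = 0 := by
      have := hv y (Submodule.subset_span (by simp))
      simpa [phi_symm] using this
    have hz : phi m v z = 0 := by
      have := hv z (Submodule.subset_span (by simp))
      simpa [phi_symm] using this
    have hvx : phi m v x ≠ 1 := hcon v hy hz
    have : phi m v x = 0 := by
      by_contra h0
      exact hvx (zmod2_ne_zero h0)
    simpa [LinearMap.BilinForm.IsOrtho, phi_symm] using this
  rwa [LinearMap.BilinForm.orthogonal_orthogonal phiB_nondeg phiB_refl] at hmem

end Stmt6Aux

open Stmt6Aux
theorem stmt_6 (m : ℕ) (hm : 4 ≤ m) (a b c : Vm m)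
    (hind : LinearIndependent (ZMod 2) ![a, b, c])
    (ε₁ ε₂ ε₃ : ZMod 2) :
    ∃ w w' : Vm m,
      phi m w a = ε₁ ∧ phi m w' a = ε₁ ∧
      phi m w b = ε₂ ∧ phi m w' b = ε₂ ∧
      phi m w c = ε₃ ∧ phi m w' c = ε₃ ∧
      theta0 m w ≠ theta0 m w' := by
  classical
  -- non-membership facts
  have hspan : ∀ (i : Fin 3) (s : Set (Fin 3)), i ∉ s →
      ![a,b,c] i ∉ Submodule.span (ZMod 2) (![a,b,c] '' s) :=
    fun i s his => hind.notMem_span_image his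
  have hna : a ∉ Submodule.span (ZMod 2) ({b, c} : Set (Vm m)) := by
    have := hspan 0 {1, 2} (by decide)
    simpa [Set.image_insert_eq] using this
  have hnb : b ∉ Submodule.span (ZMod 2) ({a, c} : Set (Vm m)) := by
    have := hspan 1 {0, 2} (by decide)
    simpa [Set.image_insert_eq] using this
  have hnc : c ∉ Submodule.span (ZMod 2) ({a, b} : Set (Vm m)) := by
    have := hspan 2 {0, 1} (by decide)
    simpa [Set.image_insert_eq] using this
  obtain ⟨v₁, hv₁b, hv₁c, hv₁a⟩ := exists_ortho m a b c hna
  obtain ⟨v₂, hv₂a, hv₂c, hv₂b⟩ := exists_ortho m b a c hnb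
  obtain ⟨v₃, hv₃a, hv₃b, hv₃c⟩ := exists_ortho m c a b hnc
  set w₀ : Vm m := ε₁ • v₁ + ε₂ • v₂ + ε₃ • v₃ with hw₀
  have hw₀a : phi m w₀ a = ε₁ := by
    simp [hw₀, phi_add_left, phi_smul_left, hv₁a, hv₂a, hv₃a]
  have hw₀b : phi m w₀ b = ε₂ := by
    simp [hw₀, phi_add_left, phi_smul_left, hv₁b, hv₂b, hv₃b]
  have hw₀c : phi m w₀ c = ε₃ := by
    simp [hw₀, phi_add_left, phi_smul_left, hv₁c, hv₂c, hv₃c]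
  clear_value w₀
  -- a hyperbolic pair in the common orthogonal complement
  set U : Submodule (ZMod 2) (Vm m) := Submodule.span (ZMod 2) (Set.range ![a,b,c]) with hU
  have haU : a ∈ U := Submodule.subset_span ⟨0, rfl⟩
  have hbU : b ∈ U := Submodule.subset_span ⟨1, rfl⟩
  have hcU : c ∈ U := Submodule.subset_span ⟨2, rfl⟩
  have hdim : Module.finrank (ZMod 2) (Vm m) = m + m := by
    rw [Module.finrank_fintype_fun_eq_card]
    simp
  have hUdim : Module.finrank (ZMod 2) U = 3 := by
    rw [hU, finrank_span_eq_card hind]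
    simp
  set W : Submodule (ZMod 2) (Vm m) := (phiB m).orthogonal U with hW
  have hWdim : Module.finrank (ZMod 2) W = m + m - 3 := by
    rw [hW, LinearMap.BilinForm.finrank_orthogonal phiB_nondeg, hdim, hUdim]
  obtain ⟨u, hu, u', hu', huu'⟩ : ∃ u ∈ W, ∃ u' ∈ W, phi m u u' = 1 := by
    by_contra hcon
    push_neg at hcon
    have hle : W ≤ (phiB m).orthogonal W := by
      intro u hu
      rw [LinearMap.BilinForm.mem_orthogonal_iff]
      intro n hn
      have : phi m n u ≠ 1 := hcon n hn u hu
      have h0 : phi m n u = 0 := by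
        by_contra h0; exact this (zmod2_ne_zero h0)
      simpa [LinearMap.BilinForm.IsOrtho] using h0
    have h1 := Submodule.finrank_mono hle
    rw [hWdim, LinearMap.BilinForm.finrank_orthogonal phiB_nondeg, hdim, hWdim] at h1
    omega
  have huW : ∀ x ∈ U, phi m u x = 0 := fun x hx => by
    have := hu x hx
    rw [phiB_apply, phi_symm] at this
    exact this
  have hu'W : ∀ x ∈ U, phi m u' x = 0 := fun x hx => by
    have := hu' x hx
    rw [phiB_apply, phi_symm] at this
    exact this
  -- the four candidates
  have hadd : ∀ (p q : Vm m) (x : Vm m), phi m (p + q) x = phi m p x + phi m q x :=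
    fun p q x => phi_add_left p q x
  have key : ∀ t : ZMod 2, t + 1 ≠ t := by decide
  by_cases h1 : theta0 m (w₀ + u) = theta0 m w₀
  · by_cases h2 : theta0 m (w₀ + u') = theta0 m w₀
    · -- use w₀ and w₀ + u + u'
      refine ⟨w₀ + (u + u'), w₀, ?_, hw₀a, ?_, hw₀b, ?_, hw₀c, ?_⟩
      · rw [hadd, phi_add_left, huW a haU, hu'W a haU, hw₀a]; ring
      · rw [hadd, phi_add_left, huW b hbU, hu'W b hbU, hw₀b]; ring
      · rw [hadd, phi_add_left, huW c hcU, hu'W c hcU, hw₀c]; ring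
      · have e1 : theta0 m (w₀ + (u + u')) =
            theta0 m w₀ + theta0 m (u + u') + phi m w₀ (u + u') := theta0_add _ _
        have e2 : theta0 m (u + u') = theta0 m u + theta0 m u' + phi m u u' := theta0_add _ _
        have e3 : theta0 m (w₀ + u) = theta0 m w₀ + theta0 m u + phi m w₀ u := theta0_add _ _
        have e4 : theta0 m (w₀ + u') = theta0 m w₀ + theta0 m u' + phi m w₀ u' := theta0_add _ _
        rw [e3] at h1
        rw [e4] at h2
        rw [e1, e2, phi_add_right, huu']
        intro hcontra
        have : theta0 m w₀ + (theta0 m u + phi m w₀ u) + (theta0 m u' + phi m w₀ u') + 1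
            = theta0 m w₀ := by linear_combination hcontra
        have hu0 : theta0 m u + phi m w₀ u = 0 := by linear_combination h1
        have hu'0 : theta0 m u' + phi m w₀ u' = 0 := by linear_combination h2
        rw [hu0, hu'0] at this
        simpa using key (theta0 m w₀) (by linear_combination this)
    · refine ⟨w₀ + u', w₀, ?_, hw₀a, ?_, hw₀b, ?_, hw₀c, h2⟩
      · rw [hadd, hu'W a haU, hw₀a]; ring
      · rw [hadd, hu'W b hbU, hw₀b]; ring
      · rw [hadd, hu'W c hcU, hw₀c]; ring
  · refine ⟨w₀ + u, w₀, ?_, hw₀a, ?_, hw₀b, ?_, hw₀c, h1⟩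
    · rw [hadd, huW a haU, hw₀a]; ring
    · rw [hadd, huW b hbU, hw₀b]; ring
    · rw [hadd, huW c hcU, hw₀c]; ring
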